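/- (Steiner's first trick) Let P, Q be distinct points and Z the midpoint of segment PQ. Let R be a point not on line PQ and A a point on segment PR strictly between P and R. Let B be the intersection of lines QA and ZR, and let C be the intersection of lines PB and QR. Then line AC is parallel to line PQ. -/

import Mathlib

open InnerProductSpace Affine

theorem steiner_first_trick
    (P Q Z R A B C : EuclideanSpace ℝ (Fin 2))
    (hPQ : P ≠ Q) (hZ : Z = midpoint ℝ P Q)
    (hR : R ∉ line[ℝ, P, Q])
    (hA : ∃ t : ℝ, 0 < t ∧ t < 1 ∧ A = P + t • (R - P))
    (hB : B ∈ line[ℝ, Q, A] ∧ B ∈ line[ℝ, Z, R])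
    (hBu : ∀ X, X ∈ line[ℝ, Q, A] → X ∈ line[ℝ, Z, R] → X = B)
    (hC : C ∈ line[ℝ, P, B] ∧ C ∈ line[ℝ, Q, R])
    (hCu : ∀ X, X ∈ line[ℝ, P, B] → X ∈ line[ℝ, Q, R] → X = C) :
    line[ℝ, A, C] ∥ line[ℝ, P, Q] := by
  obtain ⟨t, ht0, ht1, hAdef⟩ := hA
  have h2t : (2 - t) ≠ 0 := by linarith
  -- B value
  have hBval : B = P + ((1-t)/(2-t)) • (Q - P) + (t/(2-t)) • (R - P) := by
    refine (hBu _ ?_ ?_).symm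
    · have h : P + ((1-t)/(2-t)) • (Q - P) + (t/(2-t)) • (R - P)
          = (1/(2-t)) • (A -ᵥ Q) +ᵥ Q := by
        simp only [vsub_eq_sub, vadd_eq_add, hAdef]
        match_scalars <;> field_simp <;> ring
      rw [h]
      exact smul_vsub_vadd_mem_affineSpan_pair _ _ _
    · have h : P + ((1-t)/(2-t)) • (Q - P) + (t/(2-t)) • (R - P)
          = (t/(2-t)) • (R -ᵥ Z) +ᵥ Z := by
        simp only [vsub_eq_sub, vadd_eq_add, hZ, midpoint_eq_smul_add, invOf_eq_inv]
        match_scalars <;> field_simp <;> ring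
      rw [h]
      exact smul_vsub_vadd_mem_affineSpan_pair _ _ _
  -- C value
  have hCval : C = A + (1-t) • (Q - P) := by
    refine (hCu _ ?_ ?_).symm
    · have h : A + (1-t) • (Q - P) = (2-t) • (B -ᵥ P) +ᵥ P := by
        simp only [vsub_eq_sub, vadd_eq_add, hBval, hAdef]
        match_scalars <;> field_simp <;> ring
      rw [h]
      exact smul_vsub_vadd_mem_affineSpan_pair _ _ _
    · have h : A + (1-t) • (Q - P) = t • (R -ᵥ Q) +ᵥ Q := by
        simp only [vsub_eq_sub, vadd_eq_add, hAdef]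
        module
      rw [h]
      exact smul_vsub_vadd_mem_affineSpan_pair _ _ _
  rw [AffineSubspace.affineSpan_pair_parallel_iff_vectorSpan_eq,
    vectorSpan_pair_rev, vectorSpan_pair_rev]
  have hCA : C -ᵥ A = (1-t) • (Q -ᵥ P) := by
    simp [hCval, vsub_eq_sub]
  rw [hCA]
  have h1t : (1 - t) ≠ 0 := by linarith
  rw [Submodule.span_singleton_smul_eq (IsUnit.mk0 _ h1t) _]
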